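/- arXiv:0801.1225 — 2 statements merged into one kernel-verified Lean document; each statement's English description precedes it below -/
import Mathlib

section
/- Let k be a field, let A be a finite-dimensional simple k-algebra, and let M be an A-bimodule (with both induced k-actions agreeing) that is finitely generated as a bimodule, hence finite-dimensional as a k-vector space. For every a ∈ A, let λ_a : M → M denote left multiplication by a and ρ_a : M → M denote right multiplication by a, both k-linear endomorphisms of M. Then det_k(λ_a) = det_k(ρ_a). -/
open Module

/-! Auxiliary lemmas for Lemma 4.2. -/

section DetDual
variable {k V : Type} [Field k] [AddCommGroup V] [Module k V] [FiniteDimensional k V]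

/-- The determinant of the dual (transpose) map equals the determinant of the map. -/
lemma my_det_dualMap (f : V →ₗ[k] V) : LinearMap.det (f.dualMap) = LinearMap.det f := by
  let b := Module.finBasis k V
  rw [← LinearMap.det_toMatrix b f, ← LinearMap.det_toMatrix b.dualBasis f.dualMap,
    LinearMap.dualMap_def, LinearMap.toMatrix_transpose, Matrix.det_transpose]

end DetDual

section MapSimple
variable {R M N : Type*} [Ring R] [AddCommGroup M] [AddCommGroup N] [Module R M] [Module R N]

/-- The image of a simple submodule under a linear map is zero or isomorphic to it. -/
lemma my_map_simple (f : M →ₗ[R] N) (m : Submodule R M) [IsSimpleModule R m] :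
    Submodule.map f m = ⊥ ∨ Nonempty ((Submodule.map f m) ≃ₗ[R] m) := by
  have hrange : LinearMap.range (f ∘ₗ m.subtype) = Submodule.map f m := by
    rw [LinearMap.range_comp, Submodule.range_subtype]
  rcases LinearMap.injective_or_eq_zero (f ∘ₗ m.subtype) with h | h
  · right
    have e := LinearEquiv.ofInjective (f ∘ₗ m.subtype) h
    exact ⟨(hrange ▸ e.symm : _)⟩
  · left
    rw [← hrange, h, LinearMap.range_zero]

end MapSimple

section Semisimple
variable (A : Type*) [Ring A] [IsSimpleRing A]

/-- In a simple ring, a nonzero left ideal that is closed under right multiplication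
is the whole ring. -/
lemma my_ideal_eq_top (I : Ideal A) (hmul : ∀ {x y : A}, x ∈ I → x * y ∈ I)
    (hne : I ≠ ⊥) : I = ⊤ := by
  haveI : I.IsTwoSided := ⟨fun _ h => hmul h⟩
  have h := IsSimpleRing.simple.eq_bot_or_eq_top (I.toTwoSided)
  rcases h with h | h
  · exfalso
    apply hne
    ext x
    simp only [Submodule.mem_bot]
    constructor
    · intro hx
      have : x ∈ I.toTwoSided := by simpa using hx
      rw [h] at this
      simpa using this
    · rintro rfl; exact I.zero_mem
  · ext x
    simp only [Submodule.mem_top, iff_true]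
    have : x ∈ I.toTwoSided := by rw [h]; trivial
    simpa using this

/-- A simple left-artinian ring is semisimple. -/
lemma my_isSemisimpleRing_of_artinian [IsArtinian A A] : IsSemisimpleRing A := by
  apply IsSemisimpleModule.of_sSup_simples_eq_top
  set S : Set (Submodule A A) := {m | IsSimpleModule A m} with hS
  have hmul : ∀ {x y : A}, x ∈ sSup S → x * y ∈ sSup S := by
    intro x y hx
    have hmap : Submodule.map (LinearMap.toSpanSingleton A A y) (sSup S) ≤ sSup S := by
      rw [(Submodule.gc_map_comap _).l_sSup]
      apply iSup_le; intro m; apply iSup_le; intro hm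
      haveI : IsSimpleModule A m := hm
      rcases my_map_simple (LinearMap.toSpanSingleton A A y) m with h | he
      · rw [h]; exact bot_le
      · obtain ⟨e⟩ := he
        have hsimp : IsSimpleModule A
            (Submodule.map (LinearMap.toSpanSingleton A A y) m) :=
          IsSimpleModule.congr (N := ↥m) e
        exact le_sSup hsimp
    have : x * y = LinearMap.toSpanSingleton A A y x := by
      simp [LinearMap.toSpanSingleton_apply, smul_eq_mul]
    rw [this]
    exact hmap ⟨x, hx, rfl⟩
  have hne : sSup S ≠ ⊥ := by
    haveI : IsAtomic (Submodule A A) :=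
      isAtomic_of_orderBot_wellFounded_lt (IsWellFounded.wf)
    rcases (IsAtomic.eq_bot_or_exists_atom_le (⊤ : Submodule A A)) with h | ⟨m, hm, -⟩
    · exact absurd h top_ne_bot
    · intro h0
      have : m ≤ sSup S := le_sSup (show IsSimpleModule A m from isSimpleModule_iff_isAtom.mpr hm)
      rw [h0, le_bot_iff] at this
      exact hm.1 this
  exact my_ideal_eq_top A _ hmul hne

end Semisimple

/-- A finite-dimensional simple algebra over a field is a semisimple ring. -/
lemma my_isSemisimpleRing (k A : Type*) [Field k] [Ring A] [Algebra k A] [IsSimpleRing A]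
    [FiniteDimensional k A] : IsSemisimpleRing A := by
  haveI : IsArtinian A A := isArtinian_of_tower k inferInstance
  exact my_isSemisimpleRing_of_artinian A

section Simples
variable (A : Type*) [Ring A] [IsSimpleRing A] [IsSemisimpleRing A]

/-- Every simple module over a semisimple ring is isomorphic to a submodule (left ideal)
of the ring. -/
lemma my_exists_submodule_iso (T : Type*) [AddCommGroup T] [Module A T] [IsSimpleModule A T] :
    ∃ c : Submodule A A, Nonempty (T ≃ₗ[A] c) := by
  haveI := IsSimpleModule.nontrivial (R := A) (M := T)
  obtain ⟨t, ht⟩ := exists_ne (0 : T)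
  have hsurj := IsSimpleModule.toSpanSingleton_surjective A ht
  obtain ⟨c, hc⟩ := exists_isCompl (LinearMap.ker (LinearMap.toSpanSingleton A T t))
  exact ⟨c, ⟨((LinearMap.toSpanSingleton A T t).quotKerEquivOfSurjective hsurj).symm.trans
    (Submodule.quotientEquivOfIsCompl _ _ hc)⟩⟩

/-- Any two simple modules over a simple semisimple ring are isomorphic. -/
lemma my_simples_iso (S T : Type*) [AddCommGroup S] [Module A S] [IsSimpleModule A S]
    [AddCommGroup T] [Module A T] [IsSimpleModule A T] : Nonempty (S ≃ₗ[A] T) := by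
  classical
  obtain ⟨c, ⟨eS⟩⟩ := my_exists_submodule_iso A S
  haveI hcS : IsSimpleModule A c := IsSimpleModule.congr eS.symm
  set I : Ideal A := sSup {m : Submodule A A | Nonempty ((↥m) ≃ₗ[A] T)} with hI
  have hItop : I = ⊤ := by
    apply my_ideal_eq_top A I
    · intro x y hx
      have hmap : Submodule.map (LinearMap.toSpanSingleton A A y) I ≤ I := by
        rw [hI, (Submodule.gc_map_comap _).l_sSup]
        apply iSup_le; intro m; apply iSup_le; intro hm
        obtain ⟨em⟩ := hm
        haveI : IsSimpleModule A m := IsSimpleModule.congr em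
        rcases my_map_simple (LinearMap.toSpanSingleton A A y) m with h | he
        · rw [h]; exact bot_le
        · obtain ⟨e⟩ := he
          exact le_sSup ⟨e.trans em⟩
      have hxy : x * y = LinearMap.toSpanSingleton A A y x := by
        simp [LinearMap.toSpanSingleton_apply, smul_eq_mul]
      rw [hxy]
      exact hmap ⟨x, hx, rfl⟩
    · obtain ⟨d, ⟨eT⟩⟩ := my_exists_submodule_iso A T
      haveI hd' : IsSimpleModule A d := IsSimpleModule.congr eT.symm
      intro h0
      have hd : d ≤ I := le_sSup ⟨eT.symm⟩
      rw [h0, le_bot_iff] at hd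
      exact (isSimpleModule_iff_isAtom.mp hd').1 hd
  obtain ⟨p, hp⟩ := exists_isCompl c
  set π := Submodule.linearProjOfIsCompl c p hp with hπdef
  have hπ : π ≠ 0 := by
    haveI := IsSimpleModule.nontrivial (R := A) (M := c)
    obtain ⟨z, hz⟩ := exists_ne (0 : c)
    intro h0
    have hzz : π z = z := Submodule.linearProjOfIsCompl_apply_left hp z
    rw [h0] at hzz
    exact hz hzz.symm
  have hnot : ¬ (I ≤ LinearMap.ker π) := by
    intro hle
    rw [hItop, top_le_iff] at hle
    exact hπ (LinearMap.ker_eq_top.mp hle)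
  have hex : ∃ m : Submodule A A, Nonempty ((↥m) ≃ₗ[A] T) ∧ ¬ (m ≤ LinearMap.ker π) := by
    by_contra hall
    push_neg at hall
    exact hnot (sSup_le fun m hm => hall m hm)
  obtain ⟨m, ⟨em⟩, hnle⟩ := hex
  haveI : IsSimpleModule A m := IsSimpleModule.congr em
  have hg : π ∘ₗ m.subtype ≠ 0 := by
    intro h0
    apply hnle
    intro x hx
    have : (π ∘ₗ m.subtype) ⟨x, hx⟩ = 0 := by rw [h0]; rfl
    simpa [LinearMap.mem_ker] using this
  have hbij := LinearMap.bijective_of_ne_zero hg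
  exact ⟨eS.trans ((LinearEquiv.ofBijective _ hbij).symm.trans em)⟩

end Simples

/-- Over a finite-dimensional simple algebra, two finite-dimensional modules with the same
`k`-dimension are isomorphic as `A`-modules. -/
lemma my_iso_of_finrank_eq (k A : Type*) [Field k] [Ring A] [Algebra k A] [IsSimpleRing A]
    [FiniteDimensional k A] (n : ℕ) :
    ∀ (M N : Type) [AddCommGroup M] [AddCommGroup N] [Module k M] [Module k N]
      [Module A M] [Module A N] [IsScalarTower k A M] [IsScalarTower k A N]
      [FiniteDimensional k M] [FiniteDimensional k N],
      finrank k M = n → finrank k N = n → Nonempty (M ≃ₗ[A] N) := by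
  haveI := my_isSemisimpleRing k A
  induction n using Nat.strong_induction_on with
  | _ n ih =>
    intro M N _ _ _ _ _ _ _ _ _ _ hM hN
    rcases Nat.eq_zero_or_pos n with hn | hn
    · subst hn
      haveI : Subsingleton M := finrank_zero_iff.mp hM
      haveI : Subsingleton N := finrank_zero_iff.mp hN
      exact ⟨LinearEquiv.ofSubsingleton M N⟩
    · haveI : Nontrivial M := by
        apply Module.nontrivial_of_finrank_pos (R := k); omega
      haveI : Nontrivial N := by
        apply Module.nontrivial_of_finrank_pos (R := k); omega
      obtain ⟨S₁, hS₁⟩ := IsSemisimpleModule.exists_simple_submodule (R := A) (M := M)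
      obtain ⟨T₁, hT₁⟩ := IsSemisimpleModule.exists_simple_submodule (R := A) (M := N)
      haveI := hS₁; haveI := hT₁
      obtain ⟨p, hp⟩ := exists_isCompl S₁
      obtain ⟨q, hq⟩ := exists_isCompl T₁
      haveI : FiniteDimensional k S₁ :=
        FiniteDimensional.of_injective ((S₁.subtype).restrictScalars k) S₁.injective_subtype
      haveI : FiniteDimensional k T₁ :=
        FiniteDimensional.of_injective ((T₁.subtype).restrictScalars k) T₁.injective_subtype
      haveI : FiniteDimensional k p :=
        FiniteDimensional.of_injective ((p.subtype).restrictScalars k) p.injective_subtype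
      haveI : FiniteDimensional k q :=
        FiniteDimensional.of_injective ((q.subtype).restrictScalars k) q.injective_subtype
      obtain ⟨e₁⟩ := my_simples_iso A S₁ T₁
      have hrank1 : finrank k S₁ = finrank k T₁ :=
        (e₁.restrictScalars k).finrank_eq
      have eM := (Submodule.prodEquivOfIsCompl S₁ p hp)
      have eN := (Submodule.prodEquivOfIsCompl T₁ q hq)
      have hM' : finrank k S₁ + finrank k p = n := by
        rw [← hM, ← (eM.restrictScalars k).finrank_eq, finrank_prod]
      have hN' : finrank k T₁ + finrank k q = n := by
        rw [← hN, ← (eN.restrictScalars k).finrank_eq, finrank_prod]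
      have hS₁pos : 0 < finrank k S₁ := by
        haveI := IsSimpleModule.nontrivial (R := A) (M := S₁)
        exact finrank_pos
      have hrank2 : finrank k p = finrank k q := by omega
      obtain ⟨e₂⟩ := ih (finrank k p) (by omega) p q rfl hrank2.symm
      exact ⟨eM.symm.trans ((e₁.prodCongr e₂).trans eN)⟩

/-- **Lemma 4.2.** Let `k` be a field, `A` a finite-dimensional simple `k`-algebra and `M`
an `A`-bimodule (with both induced `k`-actions agreeing with the given one), which is
finite-dimensional as a `k`-vector space.  Then for every `a : A`, left multiplication by `a`
and right multiplication by `a` (as `k`-linear endomorphisms of `M`) have the same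
determinant over `k`. -/
theorem det_leftMul_eq_det_rightMul
    (k A M : Type) [Field k] [Ring A] [Algebra k A]
    [IsSimpleRing A] [FiniteDimensional k A]
    [AddCommGroup M] [Module k M] [Module A M] [Module Aᵐᵒᵖ M]
    [IsScalarTower k A M] [IsScalarTower k Aᵐᵒᵖ M]
    [SMulCommClass A Aᵐᵒᵖ M]
    [SMulCommClass A k M] [SMulCommClass Aᵐᵒᵖ k M]
    [FiniteDimensional k M] (a : A) :
    LinearMap.det (DistribMulAction.toLinearMap k M a) =
      LinearMap.det (DistribMulAction.toLinearMap k M (MulOpposite.op a)) := by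
  classical
  -- the dual space with the left `A`-action `(b • φ) m = φ ((op b) • m)`
  letI smulA : SMul A (Module.Dual k M) :=
    ⟨fun b f => f ∘ₗ DistribMulAction.toLinearMap k M (MulOpposite.op b)⟩
  have smul_def : ∀ (b : A) (f : Module.Dual k M) (m : M),
      (b • f) m = f ((MulOpposite.op b) • m) := fun _ _ _ => rfl
  letI modA : Module A (Module.Dual k M) :=
    { smul := (· • ·)
      one_smul := fun f => by ext m; rw [smul_def]; simp
      mul_smul := fun x y f => by
        ext m
        rw [smul_def, smul_def, smul_def, MulOpposite.op_mul, mul_smul]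
      smul_zero := fun x => by ext m; rw [smul_def]; simp
      smul_add := fun x f g => by
        ext m; rw [smul_def]; simp [smul_def]
      add_smul := fun x y f => by
        ext m
        rw [smul_def]
        simp only [LinearMap.add_apply, smul_def]
        rw [MulOpposite.op_add, add_smul, map_add]
      zero_smul := fun f => by
        ext m; rw [smul_def]; simp }
  letI : IsScalarTower k A (Module.Dual k M) := by
    constructor
    intro c b f
    ext m
    rw [smul_def]
    simp only [LinearMap.smul_apply, smul_def]
    rw [MulOpposite.op_smul, smul_assoc]
    exact map_smul f c _
  obtain ⟨e⟩ := my_iso_of_finrank_eq k A (finrank k M) M (Module.Dual k M) rfl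
    Subspace.dual_finrank_eq
  letI : LinearMap.CompatibleSMul M (Module.Dual k M) k A := by
    constructor
    intro f c x
    rw [show (c : k) • x = (c • (1 : A)) • x by rw [smul_assoc, one_smul],
        map_smul, smul_assoc, one_smul]
  let ek : M ≃ₗ[k] Module.Dual k M := e.restrictScalars k
  have hconj : ek.conj (DistribMulAction.toLinearMap k M a) =
      (DistribMulAction.toLinearMap k M (MulOpposite.op a)).dualMap := by
    ext f m
    simp only [LinearEquiv.conj_apply, LinearMap.coe_comp, Function.comp_apply,
      LinearEquiv.coe_coe, DistribSMul.toLinearMap_apply, LinearMap.dualMap_apply]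
    have h1 : ek ((a : A) • (ek.symm f)) = a • f := by
      show (e.restrictScalars k) _ = _
      have : e ((a : A) • (e.symm f)) = a • (e (e.symm f)) := map_smul e a _
      rw [LinearEquiv.apply_symm_apply] at this
      exact this
    show (ek (a • ek.symm f)) m = f (MulOpposite.op a • m)
    rw [h1, smul_def]
  calc LinearMap.det (DistribMulAction.toLinearMap k M a)
      = LinearMap.det (ek.conj (DistribMulAction.toLinearMap k M a)) :=
        (LinearMap.det_conj _ ek).symm
    _ = LinearMap.det ((DistribMulAction.toLinearMap k M (MulOpposite.op a)).dualMap) := by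
        rw [hconj]
    _ = LinearMap.det (DistribMulAction.toLinearMap k M (MulOpposite.op a)) :=
        my_det_dualMap _
end

section
/- Let C be an ℝ-linear category, let F : C → C be an ℝ-linear functor, and let ω be an object of C such that the endomorphism algebra E = End(ω) is a finite-dimensional simple ℝ-algebra and the ℝ-vector space G = Hom(F(ω), ω) is finite-dimensional. Then for every automorphism α of ω, the ℝ-linear endomorphisms of G given by φ ↦ α ∘ φ and φ ↦ φ ∘ F(α) have the same determinant over ℝ. -/
open CategoryTheory

open Module in
/-- The opposite of a simple ring is simple. -/
theorem isSimpleRing_op_aux {R : Type*} [Ring R] [IsSimpleRing R] : IsSimpleRing Rᵐᵒᵖ := by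
  refine IsSimpleRing.of_eq_bot_or_eq_top fun I => ?_
  let J : TwoSidedIdeal R := TwoSidedIdeal.mk' {x : R | MulOpposite.op x ∈ I}
    (by simp) (fun hx hy => by simpa using I.add_mem hx hy)
    (fun hx => by simpa using I.neg_mem hx)
    (fun {x y} hy => by simpa using I.mul_mem_right _ _ hy)
    (fun {x y} hx => by simpa using I.mul_mem_left _ _ hx)
  have hmem : ∀ x : R, x ∈ J ↔ MulOpposite.op x ∈ I := fun x =>
    TwoSidedIdeal.mem_mk' _ _ _ _ _ _ x
  rcases IsSimpleOrder.eq_bot_or_eq_top J with h | h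
  · left
    refine SetLike.ext fun x => ?_
    rw [TwoSidedIdeal.mem_bot]
    constructor
    · intro hx
      have : x.unop ∈ J := (hmem _).2 (by simpa using hx)
      rw [h, TwoSidedIdeal.mem_bot] at this
      simpa using congrArg MulOpposite.op this
    · rintro rfl; exact I.zero_mem
  · right
    have h1 : (1 : Rᵐᵒᵖ) ∈ I := by
      have : (1 : R) ∈ J := h ▸ TwoSidedIdeal.mem_top R
      simpa using (hmem 1).1 this
    refine SetLike.ext fun x => ?_
    simp only [TwoSidedIdeal.mem_top, iff_true]
    simpa using I.mul_mem_left x 1 h1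

section SimpleAlgebra

open Module

variable {A : Type*} [Ring A]

/-- The image of a simple submodule of `A` under right multiplication is `⊥` or
isomorphic to it. -/
theorem map_toSpanSingleton_bot_or_equiv_aux (m : Submodule A A) [IsSimpleModule A m] (a : A) :
    m.map (LinearMap.toSpanSingleton A A a) = ⊥ ∨
      Nonempty (m ≃ₗ[A] (m.map (LinearMap.toSpanSingleton A A a))) := by
  set ra := LinearMap.toSpanSingleton A A a
  let ℓ : m →ₗ[A] A := ra.comp m.subtype
  have hrange : LinearMap.range ℓ = m.map ra := by
    rw [LinearMap.range_comp, Submodule.range_subtype]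
  rcases ℓ.injective_or_eq_zero with h | h
  · right
    exact ⟨(LinearEquiv.ofInjective ℓ h).trans (LinearEquiv.ofEq _ _ hrange)⟩
  · left
    rw [← hrange, h, LinearMap.range_zero]

/-- In a simple ring, any set of submodules (of the ring as a left module over itself) that is
closed under right multiplication up to `⊥` and contains a nonzero member has `sSup = ⊤`. -/
theorem sSup_eq_top_of_simple_aux [IsSimpleRing A] (s : Set (Submodule A A))
    (hmap : ∀ m ∈ s, ∀ a : A, m.map (LinearMap.toSpanSingleton A A a) = ⊥ ∨
      m.map (LinearMap.toSpanSingleton A A a) ∈ s)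
    (hne : ∃ m ∈ s, m ≠ ⊥) : sSup s = ⊤ := by
  set J : Submodule A A := sSup s with hJ
  have hright : ∀ x ∈ J, ∀ a : A, x * a ∈ J := by
    intro x hx a
    have h1 : J.map (LinearMap.toSpanSingleton A A a) ≤ J := by
      rw [hJ, (Submodule.gc_map_comap (LinearMap.toSpanSingleton A A a)).l_sSup]
      refine iSup₂_le fun q hq => ?_
      rcases hmap q hq a with h | h
      · rw [h]; exact bot_le
      · exact le_sSup h
    have : x * a = LinearMap.toSpanSingleton A A a x := by
      simp [LinearMap.toSpanSingleton_apply, smul_eq_mul]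
    rw [this]
    exact h1 ⟨x, hx, rfl⟩
  let K : TwoSidedIdeal A := TwoSidedIdeal.mk' (J : Set A) J.zero_mem
    (fun hx hy => J.add_mem hx hy) (fun hx => J.neg_mem hx)
    (fun {x y} hy => by simpa [smul_eq_mul] using J.smul_mem x hy)
    (fun {x y} hx => hright _ hx y)
  have hmemK : ∀ x : A, x ∈ K ↔ x ∈ J := fun x => TwoSidedIdeal.mem_mk' _ _ _ _ _ _ x
  obtain ⟨m, hm, hmne⟩ := hne
  obtain ⟨x₀, hx₀m, hx₀⟩ := Submodule.exists_mem_ne_zero_of_ne_bot hmne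
  have h1K : (1 : A) ∈ K :=
    IsSimpleRing.one_mem_of_ne_zero_mem K hx₀ ((hmemK x₀).2 (le_sSup hm hx₀m))
  have h1J : (1 : A) ∈ J := (hmemK 1).1 h1K
  rw [hJ] at h1J ⊢
  refine Submodule.eq_top_iff'.2 fun x => ?_
  simpa using Submodule.smul_mem _ x h1J

/-- A finite-dimensional simple algebra over a field is a semisimple ring. -/
theorem isSemisimpleRing_of_isSimpleRing_aux (K : Type*) [Field K] [Algebra K A]
    [IsSimpleRing A] [FiniteDimensional K A] : IsSemisimpleRing A := by
  haveI : IsArtinian A A := isArtinian_of_tower K inferInstance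
  haveI : IsAtomic (Submodule A A) :=
    isAtomic_of_orderBot_wellFounded_lt (IsWellFounded.wf)
  refine IsSemisimpleModule.of_sSup_simples_eq_top ?_
  refine sSup_eq_top_of_simple_aux _ ?_ ?_
  · intro m hm a
    haveI : IsSimpleModule A m := hm
    rcases map_toSpanSingleton_bot_or_equiv_aux m a with h | ⟨⟨e⟩⟩
    · exact Or.inl h
    · exact Or.inr (IsSimpleModule.congr e.symm)
  · obtain ⟨m, hm⟩ := IsAtomic.exists_atom (α := Submodule A A)
    exact ⟨m, isSimpleModule_iff_isAtom.2 hm, hm.1⟩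

/-- Every simple module over a semisimple ring is isomorphic to a simple submodule of the
ring itself. -/
theorem exists_submodule_equiv_of_isSimpleModule_aux [IsSemisimpleRing A]
    (S : Type*) [AddCommGroup S] [Module A S] [IsSimpleModule A S] :
    ∃ b : Submodule A A, IsSimpleModule A b ∧ Nonempty (S ≃ₗ[A] b) := by
  haveI := IsSimpleModule.nontrivial A S
  obtain ⟨s, hs⟩ := exists_ne (0 : S)
  let f := LinearMap.toSpanSingleton A S s
  have hsurj : Function.Surjective f := by
    have hbot : LinearMap.range f ≠ ⊥ := by
      intro h
      have h1 : f 1 ∈ LinearMap.range f := LinearMap.mem_range_self f 1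
      rw [h, Submodule.mem_bot] at h1
      exact hs (by simpa [f, LinearMap.toSpanSingleton_apply] using h1)
    rw [← LinearMap.range_eq_top]
    exact (eq_bot_or_eq_top (LinearMap.range f)).resolve_left hbot
  obtain ⟨b, hb⟩ := exists_isCompl (LinearMap.ker f)
  have e : S ≃ₗ[A] b :=
    ((f.quotKerEquivOfSurjective hsurj).symm.trans
      (Submodule.quotientEquivOfIsCompl _ b hb))
  exact ⟨b, IsSimpleModule.congr e.symm, ⟨e⟩⟩

/-- Any two simple modules over a semisimple simple ring are isomorphic. -/
theorem nonempty_simple_linearEquiv_aux [IsSimpleRing A] [IsSemisimpleRing A]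
    {S T : Type*} [AddCommGroup S] [AddCommGroup T] [Module A S] [Module A T]
    [IsSimpleModule A S] [IsSimpleModule A T] : Nonempty (S ≃ₗ[A] T) := by
  obtain ⟨b, hbs, ⟨eS⟩⟩ := exists_submodule_equiv_of_isSimpleModule_aux (A := A) S
  obtain ⟨c, hcs, ⟨eT⟩⟩ := exists_submodule_equiv_of_isSimpleModule_aux (A := A) T
  haveI := hbs; haveI := hcs
  -- the isotypic component of `b` is a two-sided ideal, hence all of `A`
  have htop : sSup {m : Submodule A A | Nonempty (b ≃ₗ[A] m)} = ⊤ := by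
    refine sSup_eq_top_of_simple_aux _ ?_
      ⟨b, ⟨LinearEquiv.refl A b⟩, (isSimpleModule_iff_isAtom.1 hbs).1⟩
    rintro m ⟨em⟩ a
    haveI : IsSimpleModule A m := IsSimpleModule.congr em.symm
    rcases map_toSpanSingleton_bot_or_equiv_aux m a with h | ⟨⟨e⟩⟩
    · exact Or.inl h
    · exact Or.inr ⟨em.trans e⟩
  -- project onto `c` to obtain a nonzero map from some copy of `b`
  obtain ⟨p, hp⟩ := exists_isCompl c
  let π := Submodule.linearProjOfIsCompl c p hp
  have hexists : ∃ m ∈ {m : Submodule A A | Nonempty (b ≃ₗ[A] m)},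
      π.comp m.subtype ≠ 0 := by
    by_contra h
    push_neg at h
    have hker : sSup {m : Submodule A A | Nonempty (b ≃ₗ[A] m)} ≤ LinearMap.ker π := by
      refine sSup_le fun m hm => fun x hx => ?_
      have := h m hm
      have : π.comp m.subtype ⟨x, hx⟩ = 0 := by rw [this]; rfl
      simpa using this
    rw [htop, top_le_iff] at hker
    haveI := IsSimpleModule.nontrivial A c
    obtain ⟨y, hy⟩ := exists_ne (0 : c)
    have h1 : π (y : A) = y := Submodule.linearProjOfIsCompl_apply_left hp y
    have h2 : π (y : A) = 0 := by
      have : (y : A) ∈ LinearMap.ker π := hker ▸ Submodule.mem_top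
      simpa using this
    exact hy (by rw [← h1, h2])
  obtain ⟨m, ⟨em⟩, hne⟩ := hexists
  haveI : IsSimpleModule A m := IsSimpleModule.congr em.symm
  have hbij := LinearMap.bijective_of_ne_zero hne
  exact ⟨eS.trans <| (em.trans (LinearEquiv.ofBijective _ hbij)).trans eT.symm⟩

/-- Over a finite-dimensional simple algebra, two modules of equal finite dimension over the
base field are isomorphic. -/
theorem nonempty_linearEquiv_of_finrank_eq_aux (K : Type*) [Field K] [Algebra K A]
    [IsSimpleRing A] [FiniteDimensional K A] (n : ℕ) :
    ∀ (M N : Type u) [AddCommGroup M] [AddCommGroup N] [Module A M] [Module A N]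
      [Module K M] [Module K N] [IsScalarTower K A M] [IsScalarTower K A N]
      [FiniteDimensional K M] [FiniteDimensional K N],
      finrank K M = n → finrank K N = n → Nonempty (M ≃ₗ[A] N) := by
  haveI : IsSemisimpleRing A := isSemisimpleRing_of_isSimpleRing_aux K
  induction n using Nat.strong_induction_on with
  | _ n ih =>
    intro M N _ _ _ _ _ _ _ _ _ _ hM hN
    rcases subsingleton_or_nontrivial M with hMs | hMn
    · have : finrank K N = 0 := by
        rw [hN, ← hM, finrank_zero_of_subsingleton]
      haveI : Subsingleton N := finrank_zero_iff.1 this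
      exact ⟨LinearEquiv.ofSubsingleton M N⟩
    · haveI : Nontrivial N := by
        refine Module.finrank_pos_iff (R := K).1 ?_
        rw [hN, ← hM]
        exact Module.finrank_pos (R := K)
      obtain ⟨S, hS⟩ := IsSemisimpleModule.exists_simple_submodule (R := A) (M := M)
      obtain ⟨T, hT⟩ := IsSemisimpleModule.exists_simple_submodule (R := A) (M := N)
      haveI := hS; haveI := hT
      obtain ⟨e⟩ := nonempty_simple_linearEquiv_aux (A := A) (S := S) (T := T)
      obtain ⟨S', hS'⟩ := exists_isCompl S
      obtain ⟨T', hT'⟩ := exists_isCompl T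
      let eqM : (S × S') ≃ₗ[A] M := Submodule.prodEquivOfIsCompl S S' hS'
      let eqN : (T × T') ≃ₗ[A] N := Submodule.prodEquivOfIsCompl T T' hT'
      haveI : FiniteDimensional K S :=
        FiniteDimensional.of_injective (S.subtype.restrictScalars K) S.injective_subtype
      haveI : FiniteDimensional K S' :=
        FiniteDimensional.of_injective (S'.subtype.restrictScalars K) S'.injective_subtype
      haveI : FiniteDimensional K T :=
        FiniteDimensional.of_injective (T.subtype.restrictScalars K) T.injective_subtype
      haveI : FiniteDimensional K T' :=
        FiniteDimensional.of_injective (T'.subtype.restrictScalars K) T'.injective_subtype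
      have hST : finrank K S = finrank K T := (e.restrictScalars K).finrank_eq
      have hMsum : finrank K S + finrank K S' = n := by
        rw [← hM, ← finrank_prod]
        exact (eqM.restrictScalars K).finrank_eq
      have hNsum : finrank K T + finrank K T' = n := by
        rw [← hN, ← finrank_prod]
        exact (eqN.restrictScalars K).finrank_eq
      haveI := IsSimpleModule.nontrivial A S
      have hSpos : 0 < finrank K S := finrank_pos
      have hlt : finrank K S' < n := by omega
      have hdim : finrank K T' = finrank K S' := by omega
      obtain ⟨e'⟩ := ih (finrank K S') hlt S' T' rfl hdim
      exact ⟨eqM.symm.trans ((e.prodCongr e').trans eqN)⟩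

/-- The transpose of an endomorphism of a finite-dimensional space has the same
determinant. -/
theorem det_transpose_aux {K : Type*} [Field K] {V : Type*} [AddCommGroup V] [Module K V]
    [FiniteDimensional K V] (u : V →ₗ[K] V) :
    LinearMap.det (Module.Dual.transpose (R := K) u) = LinearMap.det u := by
  let B := Module.finBasis K V
  rw [← LinearMap.det_toMatrix B u,
    ← LinearMap.det_toMatrix B.dualBasis (Module.Dual.transpose (R := K) u),
    LinearMap.toMatrix_transpose, Matrix.det_transpose]

/-- Two representations of a finite-dimensional simple real algebra on spaces of the same
dimension assign each element equal determinants. -/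
theorem det_algHom_eq_aux {V W : Type u} [IsSimpleRing A] [Algebra ℝ A]
    [FiniteDimensional ℝ A]
    [AddCommGroup V] [Module ℝ V] [FiniteDimensional ℝ V]
    [AddCommGroup W] [Module ℝ W] [FiniteDimensional ℝ W]
    (hdim : finrank ℝ V = finrank ℝ W)
    (f : A →ₐ[ℝ] Module.End ℝ V) (g : A →ₐ[ℝ] Module.End ℝ W) (a : A) :
    LinearMap.det (f a) = LinearMap.det (g a) := by
  letI mV : Module A V := Module.compHom V f.toRingHom
  letI mW : Module A W := Module.compHom W g.toRingHom
  haveI : IsScalarTower ℝ A V := ⟨fun r b v => by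
    show f (r • b) v = r • f b v
    rw [map_smul]; rfl⟩
  haveI : IsScalarTower ℝ A W := ⟨fun r b w => by
    show g (r • b) w = r • g b w
    rw [map_smul]; rfl⟩
  obtain ⟨e⟩ := nonempty_linearEquiv_of_finrank_eq_aux (A := A) ℝ (finrank ℝ V) V W rfl hdim.symm
  let e' : V ≃ₗ[ℝ] W := e.restrictScalars ℝ
  have key : g a = (e' : V →ₗ[ℝ] W) ∘ₗ (f a) ∘ₗ (e'.symm : W →ₗ[ℝ] V) := by
    ext w
    show g a w = e' (f a (e'.symm w))
    calc g a w = a • w := rfl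
      _ = a • e (e.symm w) := by rw [e.apply_symm_apply]
      _ = e (a • e.symm w) := (e.map_smul a (e.symm w)).symm
      _ = e' (f a (e'.symm w)) := rfl
  rw [key, LinearMap.det_conj]

end SimpleAlgebra

open Module

/-- Let `C` be an `ℝ`-linear category, `F : C ⥤ C` an `ℝ`-linear functor and `ω` an object of `C`
such that `E = End ω` is a finite-dimensional simple `ℝ`-algebra and the `ℝ`-vector space
`G = (F.obj ω ⟶ ω)` is finite-dimensional.  Then for every automorphism `α` of `ω`, the
`ℝ`-linear endomorphisms of `G` given by postcomposition with `α` (`φ ↦ α ∘ φ`) and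
precomposition with `F.map α` (`φ ↦ φ ∘ F.map α`) have the same determinant over `ℝ`. -/
theorem det_postcomp_eq_det_precomp
    (C : Type) [Category C] [Preadditive C] [Linear ℝ C]
    (F : C ⥤ C) [F.Additive] [F.Linear ℝ] (ω : C)
    [IsSimpleRing (End ω)] [FiniteDimensional ℝ (End ω)]
    [FiniteDimensional ℝ (F.obj ω ⟶ ω)]
    (α : ω ≅ ω) :
    LinearMap.det (Linear.rightComp ℝ (F.obj ω) α.hom) =
      LinearMap.det (Linear.leftComp ℝ ω (F.map α.hom)) := by
  haveI : IsSimpleRing (End ω)ᵐᵒᵖ := isSimpleRing_op_aux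
  haveI : FiniteDimensional ℝ (End ω)ᵐᵒᵖ :=
    FiniteDimensional.of_injective
      ((MulOpposite.opLinearEquiv ℝ (M := End ω)).symm.toLinearMap)
      (MulOpposite.opLinearEquiv ℝ (M := End ω)).symm.injective
  -- the right-module structure on `G = (F.obj ω ⟶ ω)` by precomposition with `F.map`
  let gA : (End ω)ᵐᵒᵖ →ₐ[ℝ] Module.End ℝ (F.obj ω ⟶ ω) :=
    AlgHom.ofLinearMap
      { toFun := fun a => Linear.leftComp ℝ ω (F.map a.unop)
        map_add' := fun x y => by
          ext φ
          show F.map ((x.unop : ω ⟶ ω) + (y.unop : ω ⟶ ω)) ≫ φ =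
            F.map x.unop ≫ φ + F.map y.unop ≫ φ
          rw [F.map_add, Preadditive.add_comp]
        map_smul' := fun r x => by
          ext φ
          show F.map (r • (x.unop : ω ⟶ ω)) ≫ φ = r • (F.map x.unop ≫ φ)
          rw [F.map_smul, Linear.smul_comp] }
      (by
        ext φ
        show F.map ((1 : End ω) : ω ⟶ ω) ≫ φ = φ
        rw [End.one_def, F.map_id, Category.id_comp])
      (fun x y => by
        ext φ
        show F.map ((x.unop : ω ⟶ ω) ≫ (y.unop : ω ⟶ ω)) ≫ φ =
          F.map x.unop ≫ (F.map y.unop ≫ φ)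
        rw [F.map_comp, Category.assoc])
  -- the right-module structure on the dual of `G` coming from postcomposition
  let fA : (End ω)ᵐᵒᵖ →ₐ[ℝ] Module.End ℝ (Module.Dual ℝ (F.obj ω ⟶ ω)) :=
    AlgHom.ofLinearMap
      { toFun := fun a => Module.Dual.transpose (R := ℝ)
          (Linear.rightComp ℝ (F.obj ω) a.unop)
        map_add' := fun x y => by
          ext ψ φ
          show ψ (φ ≫ ((x.unop : ω ⟶ ω) + (y.unop : ω ⟶ ω))) =
            ψ (φ ≫ x.unop) + ψ (φ ≫ y.unop)
          rw [Preadditive.comp_add, map_add]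
        map_smul' := fun r x => by
          ext ψ φ
          show ψ (φ ≫ (r • (x.unop : ω ⟶ ω))) = r • ψ (φ ≫ x.unop)
          rw [Linear.comp_smul, map_smul] }
      (by
        ext ψ φ
        show ψ (φ ≫ ((1 : End ω) : ω ⟶ ω)) = ψ φ
        rw [End.one_def, Category.comp_id])
      (fun x y => by
        ext ψ φ
        show ψ (φ ≫ ((x.unop : ω ⟶ ω) ≫ (y.unop : ω ⟶ ω))) =
          ψ ((φ ≫ x.unop) ≫ y.unop)
        rw [Category.assoc])
  have hdim : finrank ℝ (Module.Dual ℝ (F.obj ω ⟶ ω)) = finrank ℝ (F.obj ω ⟶ ω) :=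
    Subspace.dual_finrank_eq
  have h := det_algHom_eq_aux (A := (End ω)ᵐᵒᵖ) hdim fA gA (MulOpposite.op α.hom)
  have hf : fA (MulOpposite.op α.hom) =
      Module.Dual.transpose (R := ℝ) (Linear.rightComp ℝ (F.obj ω) α.hom) := rfl
  have hg : gA (MulOpposite.op α.hom) = Linear.leftComp ℝ ω (F.map α.hom) := rfl
  rw [hf, hg, det_transpose_aux] at h
  exact h
end
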